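/- Consider maximizing G(P_1, P_2) := ∑_{i=1}^{K+1} C((P_1^i + b²P_2^i)/N_0)·l^i over all (P_1, P_2, δ) with P_1^i, P_2^i ≥ 0 (i = 1,…,K+1), δ^i ≥ 0 (i = 0,…,K), and the one-way ET causality constraints ∑_{i=1}^k P_1^i l^i ≤ ∑_{i=0}^{k-1}(E_1^i − δ^i) and ∑_{i=1}^k b²P_2^i l^i ≤ ∑_{i=0}^{k-1}(b²E_2^i + δ^i) for all k = 1,…,K+1. Then every maximizer (P_1, P_2, δ) satisfies ∑_{i=1}^{K+1} P_1^i l^i = ∑_{i=0}^{K}(E_1^i − δ^i) and ∑_{i=1}^{K+1} P_2^i l^i = ∑_{i=0}^{K}(E_2^i + δ^i/b²); i.e., the source completely uses up its harvested energy (for transmission or transfer) and the relay uses up its harvested plus received energy by the deadline. -/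

import Mathlib

/-- `C(x) = log₂(1+x)`. -/
noncomputable def Cfun (x : ℝ) : ℝ := Real.logb 2 (1 + x)

/-- One-way ET feasible set: nonnegative powers and S→R transfers, with energy causality
at the source (harvested minus transferred) and the relay (harvested plus received). -/
def FeasOW (K : ℕ) (l E1 E2 : ℕ → ℝ) (b : ℝ) (P1 P2 δ : ℕ → ℝ) : Prop :=
  (∀ i ∈ Finset.range (K + 1), 0 ≤ P1 i ∧ 0 ≤ P2 i) ∧
  (∀ i ∈ Finset.range (K + 1), 0 ≤ δ i) ∧
  (∀ k, 1 ≤ k → k ≤ K + 1 →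
    ∑ i ∈ Finset.range k, P1 i * l i ≤ ∑ i ∈ Finset.range k, (E1 i - δ i)) ∧
  (∀ k, 1 ≤ k → k ≤ K + 1 →
    ∑ i ∈ Finset.range k, b ^ 2 * P2 i * l i ≤
      ∑ i ∈ Finset.range k, (b ^ 2 * E2 i + δ i))

/-- The multiple-access rate objective `G(P₁,P₂) = ∑ C((P₁ⁱ+b²P₂ⁱ)/N₀)·lⁱ`. -/
noncomputable def Gmac (K : ℕ) (l : ℕ → ℝ) (N0 b : ℝ) (P1 P2 : ℕ → ℝ) : ℝ :=
  ∑ i ∈ Finset.range (K + 1), Cfun ((P1 i + b ^ 2 * P2 i) / N0) * l i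

lemma Cfun_lt_Cfun {x y : ℝ} (hx : 0 ≤ x) (hxy : x < y) : Cfun x < Cfun y :=
  Real.logb_lt_logb one_lt_two (by linarith) (by linarith)

/-- Lemma 6: every maximizer of the MAC objective over the one-way ET
feasible set exhausts the source energy (transmission plus transfer) and the relay
energy (harvested plus received) by the deadline. -/
theorem stmt_8 (K : ℕ) (l E1 E2 : ℕ → ℝ) (N0 b : ℝ)
    (hl : ∀ i ∈ Finset.range (K + 1), 0 < l i)
    (hE1 : ∀ i ∈ Finset.range (K + 1), 0 ≤ E1 i)
    (hE2 : ∀ i ∈ Finset.range (K + 1), 0 ≤ E2 i)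
    (hN0 : 0 < N0) (hb : b ≠ 0)
    (P1 P2 δ : ℕ → ℝ)
    (hfeas : FeasOW K l E1 E2 b P1 P2 δ)
    (hopt : ∀ Q1 Q2 dq : ℕ → ℝ, FeasOW K l E1 E2 b Q1 Q2 dq →
      Gmac K l N0 b Q1 Q2 ≤ Gmac K l N0 b P1 P2) :
    ∑ i ∈ Finset.range (K + 1), P1 i * l i =
      ∑ i ∈ Finset.range (K + 1), (E1 i - δ i) ∧
    ∑ i ∈ Finset.range (K + 1), P2 i * l i =
      ∑ i ∈ Finset.range (K + 1), (E2 i + δ i / b ^ 2) := by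
  obtain ⟨hP, hδ, hc1, hc2⟩ := hfeas
  have hb2 : (0:ℝ) < b ^ 2 := by positivity
  have hKmem : K ∈ Finset.range (K + 1) := Finset.self_mem_range_succ K
  have hlK : 0 < l K := hl K hKmem
  have hP1K : 0 ≤ P1 K := (hP K hKmem).1
  have hP2K : 0 ≤ P2 K := (hP K hKmem).2
  have hargK : 0 ≤ (P1 K + b ^ 2 * P2 K) / N0 :=
    div_nonneg (add_nonneg hP1K (mul_nonneg hb2.le hP2K)) hN0.le
  constructor
  · refine le_antisymm (hc1 (K + 1) (by omega) le_rfl) ?_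
    by_contra h
    push_neg at h
    set s : ℝ := ∑ i ∈ Finset.range (K + 1), (E1 i - δ i) -
      ∑ i ∈ Finset.range (K + 1), P1 i * l i with hs
    have hspos : 0 < s := by simp only [hs]; linarith
    set Q1 : ℕ → ℝ := fun i => if i = K then P1 K + s / l K else P1 i with hQ
    have hsum_eq : ∀ k ≤ K, ∑ i ∈ Finset.range k, Q1 i * l i =
        ∑ i ∈ Finset.range k, P1 i * l i := by
      intro k hk
      refine Finset.sum_congr rfl fun i hi => ?_
      have hiK : i ≠ K := by have := Finset.mem_range.mp hi; omega
      simp [hQ, hiK]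
    have hQfeas : FeasOW K l E1 E2 b Q1 P2 δ := by
      refine ⟨fun i hi => ⟨?_, (hP i hi).2⟩, hδ, ?_, hc2⟩
      · by_cases hiK : i = K
        · simp only [hQ, hiK, if_pos rfl]
          have : 0 ≤ s / l K := (div_pos hspos hlK).le
          linarith
        · simpa [hQ, hiK] using (hP i hi).1
      · intro k hk1 hk2
        rcases Nat.lt_or_ge k (K + 1) with hk | hk
        · rw [hsum_eq k (by omega)]; exact hc1 k hk1 hk2
        · have hkK : k = K + 1 := by omega
          subst hkK
          rw [Finset.sum_range_succ, hsum_eq K le_rfl]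
          have hQK : Q1 K * l K = P1 K * l K + s := by
            simp only [hQ, if_pos rfl]
            field_simp
          rw [hQK]
          have h1 := Finset.sum_range_succ (fun i => P1 i * l i) K
          simp only [hs] at *
          linarith
    have hlt : P1 K < Q1 K := by
      simp only [hQ, if_pos rfl]
      have : 0 < s / l K := div_pos hspos hlK
      linarith
    have hstrict : Cfun ((P1 K + b ^ 2 * P2 K) / N0) * l K <
        Cfun ((Q1 K + b ^ 2 * P2 K) / N0) * l K := by
      refine mul_lt_mul_of_pos_right (Cfun_lt_Cfun hargK ?_) hlK
      gcongr
    have hgt : Gmac K l N0 b P1 P2 < Gmac K l N0 b Q1 P2 := by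
      unfold Gmac
      apply Finset.sum_lt_sum
      · intro i hi
        by_cases hiK : i = K
        · rw [hiK]; exact hstrict.le
        · simp [hQ, hiK]
      · exact ⟨K, hKmem, hstrict⟩
    exact absurd (hopt Q1 P2 δ hQfeas) (not_le.mpr hgt)
  · -- relay side
    have key : ∑ i ∈ Finset.range (K + 1), b ^ 2 * P2 i * l i =
        ∑ i ∈ Finset.range (K + 1), (b ^ 2 * E2 i + δ i) := by
      refine le_antisymm (hc2 (K + 1) (by omega) le_rfl) ?_
      by_contra h
      push_neg at h
      set s : ℝ := ∑ i ∈ Finset.range (K + 1), (b ^ 2 * E2 i + δ i) -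
        ∑ i ∈ Finset.range (K + 1), b ^ 2 * P2 i * l i with hs
      have hspos : 0 < s := by simp only [hs]; linarith
      set Q2 : ℕ → ℝ := fun i => if i = K then P2 K + s / (b ^ 2 * l K) else P2 i with hQ
      have hsum_eq : ∀ k ≤ K, ∑ i ∈ Finset.range k, b ^ 2 * Q2 i * l i =
          ∑ i ∈ Finset.range k, b ^ 2 * P2 i * l i := by
        intro k hk
        refine Finset.sum_congr rfl fun i hi => ?_
        have hiK : i ≠ K := by have := Finset.mem_range.mp hi; omega
        simp [hQ, hiK]
      have hspos' : 0 < s / (b ^ 2 * l K) := div_pos hspos (by positivity)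
      have hQfeas : FeasOW K l E1 E2 b P1 Q2 δ := by
        refine ⟨fun i hi => ⟨(hP i hi).1, ?_⟩, hδ, hc1, ?_⟩
        · by_cases hiK : i = K
          · simp only [hQ, hiK, if_pos rfl]
            linarith
          · simpa [hQ, hiK] using (hP i hi).2
        · intro k hk1 hk2
          rcases Nat.lt_or_ge k (K + 1) with hk | hk
          · rw [hsum_eq k (by omega)]; exact hc2 k hk1 hk2
          · have hkK : k = K + 1 := by omega
            subst hkK
            rw [Finset.sum_range_succ, hsum_eq K le_rfl]
            have hQK : b ^ 2 * Q2 K * l K = b ^ 2 * P2 K * l K + s := by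
              simp only [hQ, if_pos rfl]
              field_simp
            rw [hQK]
            have h1 := Finset.sum_range_succ (fun i => b ^ 2 * P2 i * l i) K
            simp only [hs] at *
            linarith
      have hlt : P2 K < Q2 K := by
        simp only [hQ, if_pos rfl]; linarith
      have hstrict : Cfun ((P1 K + b ^ 2 * P2 K) / N0) * l K <
          Cfun ((P1 K + b ^ 2 * Q2 K) / N0) * l K := by
        refine mul_lt_mul_of_pos_right (Cfun_lt_Cfun hargK ?_) hlK
        gcongr
      have hgt : Gmac K l N0 b P1 P2 < Gmac K l N0 b P1 Q2 := by
        unfold Gmac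
        apply Finset.sum_lt_sum
        · intro i hi
          by_cases hiK : i = K
          · rw [hiK]; exact hstrict.le
          · simp [hQ, hiK]
        · exact ⟨K, hKmem, hstrict⟩
      exact absurd (hopt P1 Q2 δ hQfeas) (not_le.mpr hgt)
    have hmul : b ^ 2 * ∑ i ∈ Finset.range (K + 1), P2 i * l i =
        b ^ 2 * ∑ i ∈ Finset.range (K + 1), (E2 i + δ i / b ^ 2) := by
      rw [Finset.mul_sum, Finset.mul_sum]
      calc ∑ i ∈ Finset.range (K + 1), b ^ 2 * (P2 i * l i)
          = ∑ i ∈ Finset.range (K + 1), b ^ 2 * P2 i * l i := by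
            refine Finset.sum_congr rfl fun i _ => by ring
        _ = ∑ i ∈ Finset.range (K + 1), (b ^ 2 * E2 i + δ i) := key
        _ = ∑ i ∈ Finset.range (K + 1), b ^ 2 * (E2 i + δ i / b ^ 2) := by
            refine Finset.sum_congr rfl fun i _ => by field_simp; try ring
    exact mul_left_cancel₀ (ne_of_gt hb2) hmul
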